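/- arXiv:2605.01635 — 2 statements merged into one kernel-verified Lean document; each statement's English description precedes it below -/
import Mathlib

section
/- Let n, k be natural numbers. The number W of 2n-tuples (v₁, ..., v_{2n}) with entries in a set V of cardinality k, such that for every v ∈ V the number of indices i ∈ {1,...,2n} with vᵢ = v is even, satisfies W ≤ C(n)·kⁿ for a constant C(n) depending only on n (one may take C(n) = (2n)!). -/
theorem stmt_5 (n k : ℕ) (V : Type*) [Fintype V] [DecidableEq V]
    (hk : Fintype.card V = k) :
    (Finset.univ.filter (fun f : Fin (2 * n) → V =>
        ∀ v : V, Even (Finset.univ.filter (fun i => f i = v)).card)).card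
      ≤ (2 * n).factorial * k ^ n := by
  classical
  set p : Fin (2 * n) → Fin n := fun i => ⟨i.val / 2, by have := i.isLt; omega⟩ with hpdef
  set Φ : Equiv.Perm (Fin (2 * n)) × (Fin n → V) → (Fin (2 * n) → V) :=
    fun σh => fun i => σh.2 (p (σh.1 i)) with hΦdef
  have hsub : (Finset.univ.filter (fun f : Fin (2 * n) → V =>
      ∀ v : V, Even (Finset.univ.filter (fun i => f i = v)).card))
      ⊆ Finset.univ.image Φ := by
    intro f hf
    rw [Finset.mem_filter] at hf
    have hf := hf.2
    set c : V → ℕ := fun v => (Finset.univ.filter (fun i => f i = v)).card with hcdef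
    -- total count
    have hsum : ∑ v : V, c v = 2 * n := by
      have := Finset.card_eq_sum_card_fiberwise
        (f := f) (s := Finset.univ) (t := Finset.univ) (fun x _ => Finset.mem_univ (f x))
      simpa using this.symm
    -- the multiset of "half" values
    set M : Multiset V := ∑ v : V, Multiset.replicate (c v / 2) v with hMdef
    have hMcount : ∀ w : V, M.count w = c w / 2 := by
      intro w
      rw [hMdef, Multiset.count_sum']
      simp [Multiset.count_replicate]
    have hMcard : Multiset.card M = n := by
      have hcards : Multiset.card M = ∑ v : V, c v / 2 := by
        rw [hMdef]; simp
      rw [hcards]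
      have h2 : 2 * ∑ v : V, c v / 2 = 2 * n := by
        rw [Finset.mul_sum]
        rw [← hsum]
        refine Finset.sum_congr rfl (fun v _ => ?_)
        obtain ⟨m, hm⟩ := hf v
        have hm' : c v = m + m := hm
        omega
      omega
    set L : List V := M.toList with hLdef
    have hL : L.length = n := by rw [hLdef, Multiset.length_toList, hMcard]
    set h : Fin n → V := fun i => L.get (Fin.cast hL.symm i) with hhdef
    -- the map h has fibers of size c v / 2
    have hofn : List.ofFn h = L := by
      apply List.ext_getElem
      · simp [hL]
      · intro i h1 h2
        simp [hhdef]
    have hmap : Multiset.map h Finset.univ.val = M := by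
      rw [Fin.univ_val_map, hofn, hLdef, Multiset.coe_toList]
    have hhfib : ∀ v : V, (Finset.univ.filter (fun j => h j = v)).card = c v / 2 := by
      intro v
      have : (Finset.univ.filter (fun j => h j = v)).card
          = Multiset.count v (Multiset.map h Finset.univ.val) := by
        rw [Multiset.count_map]
        rw [Finset.card_filter]
        simp [Multiset.countP_eq_card_filter, eq_comm]
        rfl
      rw [this, hmap, hMcount]
    -- fibers of p have size 2
    have hpfib : ∀ j : Fin n, (Finset.univ.filter (fun i : Fin (2 * n) => p i = j)).card = 2 := by
      intro j
      have hj := j.isLt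
      have : (Finset.univ.filter (fun i : Fin (2 * n) => p i = j))
          = {⟨2 * j.val, by omega⟩, ⟨2 * j.val + 1, by omega⟩} := by
        ext i
        have hi := i.isLt
        simp only [Finset.mem_filter, Finset.mem_univ, true_and, Finset.mem_insert,
          Finset.mem_singleton, hpdef, Fin.ext_iff]
        omega
      rw [this]
      rw [Finset.card_insert_of_notMem (by simp [Fin.ext_iff]), Finset.card_singleton]
    -- fibers of g := h ∘ p have size c v
    set g : Fin (2 * n) → V := fun i => h (p i) with hgdef
    have hgfib : ∀ v : V, (Finset.univ.filter (fun i => g i = v)).card = c v := by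
      intro v
      have hmapsto : ∀ x ∈ Finset.univ.filter (fun i => g i = v),
          p x ∈ Finset.univ.filter (fun j => h j = v) := by
        intro x hx
        rw [Finset.mem_filter] at hx ⊢
        exact ⟨Finset.mem_univ _, hx.2⟩
      have hcf := Finset.card_eq_sum_card_fiberwise hmapsto
      have hstep : ∀ j ∈ Finset.univ.filter (fun j => h j = v),
          ((Finset.univ.filter (fun i => g i = v)).filter (fun i => p i = j)).card = 2 := by
        intro j hj
        rw [Finset.mem_filter] at hj
        have : ((Finset.univ.filter (fun i => g i = v)).filter (fun i => p i = j))
            = Finset.univ.filter (fun i : Fin (2 * n) => p i = j) := by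
          ext i
          simp only [Finset.mem_filter, Finset.mem_univ, true_and, hgdef]
          constructor
          · tauto
          · intro hp'; exact ⟨by rw [hp']; exact hj.2, hp'⟩
        rw [this, hpfib]
      rw [Finset.sum_congr rfl hstep, Finset.sum_const, smul_eq_mul, hhfib] at hcf
      obtain ⟨m, hm⟩ := hf v
      have hm' : c v = m + m := hm
      omega
    -- build the permutation
    have hcards : ∀ v : V, Fintype.card {i // f i = v} = Fintype.card {i // g i = v} := by
      intro v
      rw [Fintype.card_subtype, Fintype.card_subtype, hgfib]
    set e : ∀ v : V, {i // f i = v} ≃ {i // g i = v} :=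
      fun v => Fintype.equivOfCardEq (hcards v) with hedef
    set σ : Equiv.Perm (Fin (2 * n)) :=
      (Equiv.sigmaFiberEquiv f).symm.trans
        ((Equiv.sigmaCongrRight e).trans (Equiv.sigmaFiberEquiv g)) with hσdef
    have hσ : ∀ i, g (σ i) = f i := by
      intro i
      have : σ i = (e (f i) ⟨i, rfl⟩).val := rfl
      rw [this]
      exact (e (f i) ⟨i, rfl⟩).prop
    rw [Finset.mem_image]
    refine ⟨(σ, h), Finset.mem_univ _, ?_⟩
    funext i
    rw [hΦdef]
    exact hσ i
  calc (Finset.univ.filter (fun f : Fin (2 * n) → V =>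
      ∀ v : V, Even (Finset.univ.filter (fun i => f i = v)).card)).card
      ≤ (Finset.univ.image Φ).card := Finset.card_le_card hsub
    _ ≤ (Finset.univ : Finset (Equiv.Perm (Fin (2 * n)) × (Fin n → V))).card :=
        Finset.card_image_le
    _ = (2 * n).factorial * k ^ n := by
        rw [Finset.card_univ, Fintype.card_prod, Fintype.card_perm, Fintype.card_fun]
        simp [hk]
end

section
/- Let F be a field of characteristic ≠ 2 and let t₁, ..., t_m be elements of a field extension of F(x) (x transcendental over F) with tᵢ² = x - aᵢ for pairwise distinct a₁, ..., a_m ∈ F. Then t₁, ..., t_m are linearly independent over F(x). -/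
open PowerSeries Finset

private noncomputable def sqrtAux {k : Type*} [Field k] (c : ℕ → k) (d : k) : ℕ → k
  | 0 => d
  | (n+1) => (c (n+1) - ∑ i ∈ (Finset.Ioo 0 (n+1)).attach,
      sqrtAux c d i.1 * sqrtAux c d ((n+1) - i.1)) / (2*d)
  decreasing_by
  · exact (Finset.mem_Ioo.mp i.2).2
  · have := (Finset.mem_Ioo.mp i.2).1; omega

private lemma exists_sqrt {k : Type*} [Field k] (h2 : (2:k) ≠ 0) (f : PowerSeries k) (d : k)
    (hd : d ≠ 0) (hdf : d * d = PowerSeries.constantCoeff f) :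
    ∃ w : PowerSeries k, w ^ 2 = f ∧ PowerSeries.constantCoeff w = d := by
  set c : ℕ → k := fun n => PowerSeries.coeff n f with hc
  set w : ℕ → k := sqrtAux c d with hw
  refine ⟨PowerSeries.mk w, ?_, by simp [hw, sqrtAux, ← PowerSeries.coeff_zero_eq_constantCoeff]⟩
  ext n
  rw [pow_two, PowerSeries.coeff_mul, Finset.Nat.sum_antidiagonal_eq_sum_range_succ_mk]
  simp only [PowerSeries.coeff_mk]
  match n with
  | 0 => simpa [hw, sqrtAux, ← PowerSeries.coeff_zero_eq_constantCoeff] using hdf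
  | (n+1) =>
    have hsplit : Finset.range (n+2) = insert 0 (insert (n+1) (Finset.Ioo 0 (n+1))) := by
      ext x; simp only [Finset.mem_insert, Finset.mem_Ioo, Finset.mem_range]; omega
    rw [hsplit, Finset.sum_insert (by simp), Finset.sum_insert (by simp)]
    have h0 : w 0 = d := by simp [hw, sqrtAux]
    have hrec : w (n+1) = (c (n+1) - ∑ i ∈ Finset.Ioo 0 (n+1), w i * w ((n+1) - i)) / (2*d) := by
      rw [hw, sqrtAux, Finset.sum_attach (Finset.Ioo 0 (n+1)) (fun i => sqrtAux c d i * sqrtAux c d ((n+1) - i))]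
    have h2d : (2:k)*d ≠ 0 := mul_ne_zero h2 hd
    rw [Nat.sub_zero, Nat.sub_self, h0, hrec]
    field_simp
    ring

open PowerSeries Finset Polynomial

-- aeval at X^2 is injective-ish
private lemma aeval_Xsq_ne {k : Type*} [Field k] (q : Polynomial k) (hq : q ≠ 0) :
    (Polynomial.aeval ((PowerSeries.X : PowerSeries k) ^ 2)) q ≠ 0 := by
  intro h
  have hco := congrArg (PowerSeries.coeff (2 * q.natDegree)) h
  rw [Polynomial.aeval_eq_sum_range] at hco
  simp only [map_sum, PowerSeries.coeff_smul, ← pow_mul, PowerSeries.coeff_X_pow, map_zero] at hco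
  rw [Finset.sum_eq_single q.natDegree] at hco
  · simp at hco
    exact hq hco
  · intro i _ hne
    have : ¬ (2 * q.natDegree = 2 * i) := by omega
    simp [this]
  · intro habs
    exact absurd (Finset.self_mem_range_succ q.natDegree) habs

private lemma aeval_Xsq_add_C_ne {k : Type*} [Field k] (b : k) (q : Polynomial k) (hq : q ≠ 0) :
    (Polynomial.aeval ((PowerSeries.X : PowerSeries k) ^ 2 + PowerSeries.C b)) q ≠ 0 := by
  have hr : q.comp (Polynomial.X + Polynomial.C b) ≠ 0 := by
    intro h0
    apply hq
    have := congrArg (fun p => p.comp (Polynomial.X - Polynomial.C b)) h0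
    simpa [Polynomial.comp_assoc, Polynomial.add_comp, Polynomial.X_comp, Polynomial.C_comp,
      sub_add_cancel] using this
  have key : (Polynomial.aeval ((PowerSeries.X : PowerSeries k) ^ 2)) (q.comp (Polynomial.X + Polynomial.C b))
      = (Polynomial.aeval ((PowerSeries.X : PowerSeries k) ^ 2 + PowerSeries.C b)) q := by
    rw [Polynomial.aeval_comp]
    simp [PowerSeries.C_eq_algebraMap]
  rw [← key]
  exact aeval_Xsq_ne _ hr

-- rescale(-1) fixes C and aeval images
private lemma rescale_neg_one_C {k : Type*} [Field k] (b : k) :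
    PowerSeries.rescale (-1 : k) (PowerSeries.C b) = PowerSeries.C b := by
  ext n
  rw [PowerSeries.coeff_rescale]
  rcases Nat.eq_zero_or_pos n with h | h
  · simp [h]
  · simp [PowerSeries.coeff_C, Nat.pos_iff_ne_zero.mp h]

private lemma rescale_neg_one_aeval {k : Type*} [Field k] (b : k) (q : Polynomial k) :
    PowerSeries.rescale (-1 : k) ((Polynomial.aeval ((PowerSeries.X : PowerSeries k) ^ 2 + PowerSeries.C b)) q)
      = (Polynomial.aeval ((PowerSeries.X : PowerSeries k) ^ 2 + PowerSeries.C b)) q := by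
  rw [Polynomial.aeval_def, Polynomial.hom_eval₂]
  have h1 : (PowerSeries.rescale (-1 : k)).comp (algebraMap k (PowerSeries k)) = algebraMap k (PowerSeries k) := by
    ext b'
    simp [← PowerSeries.C_eq_algebraMap, rescale_neg_one_C]
  have h2 : PowerSeries.rescale (-1 : k) ((PowerSeries.X : PowerSeries k) ^ 2 + PowerSeries.C b)
      = (PowerSeries.X : PowerSeries k) ^ 2 + PowerSeries.C b := by
    rw [map_add, map_pow, PowerSeries.rescale_neg_one_X, rescale_neg_one_C, neg_pow_two]
  rw [h1, h2, ← Polynomial.aeval_def]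

set_option synthInstance.maxHeartbeats 800000 in
set_option maxHeartbeats 4000000 in
theorem stmt_7 (F : Type*) [Field F] (hchar : (2 : F) ≠ 0) (m : ℕ) (K : Type*) [Field K]
    [Algebra (RatFunc F) K] (a : Fin m → F) (ha : Function.Injective a) (t : Fin m → K)
    (ht : ∀ i, (t i) ^ 2 = algebraMap (RatFunc F) K (RatFunc.X - RatFunc.C (a i))) :
    LinearIndependent (RatFunc F) t := by
  rw [Fintype.linearIndependent_iff]
  intro g hg j
  classical
  set Fb := AlgebraicClosure F with hFb
  let fb : F →+* Fb := algebraMap F Fb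
  have hfb : Function.Injective fb := (algebraMap F Fb).injective
  have h2b : (2 : Fb) ≠ 0 := by
    intro h
    apply hchar
    apply hfb
    rw [map_ofNat, map_zero, h]
  let Q := FractionRing (PowerSeries Fb)
  let Ω := AlgebraicClosure Q
  let ε : PowerSeries Fb →+* Ω := (algebraMap Q Ω).comp (algebraMap (PowerSeries Fb) Q)
  have hε : Function.Injective ε :=
    (algebraMap Q Ω).injective.comp (IsFractionRing.injective (PowerSeries Fb) Q)
  let v : PowerSeries Fb := PowerSeries.X ^ 2 + PowerSeries.C (fb (a j))
  let φ' : Polynomial F →+* PowerSeries Fb :=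
    ((Polynomial.aeval v).toRingHom : Polynomial Fb →+* PowerSeries Fb).comp
      (Polynomial.mapRingHom fb)
  have hφ'ne : ∀ p : Polynomial F, p ≠ 0 → φ' p ≠ 0 := fun p hp =>
    aeval_Xsq_add_C_ne _ _ (Polynomial.map_ne_zero hp)
  let Φ : Polynomial F →+* Ω := ε.comp φ'
  have hΦne : ∀ p : Polynomial F, p ≠ 0 → Φ p ≠ 0 := by
    intro p hp h0
    exact hφ'ne p hp (hε (by rw [map_zero]; exact h0))
  have hΦ : nonZeroDivisors (Polynomial F) ≤ (nonZeroDivisors Ω).comap Φ := by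
    intro p hp
    exact Submonoid.mem_comap.mpr
      (mem_nonZeroDivisors_of_ne_zero (hΦne p (nonZeroDivisors.ne_zero hp)))
  let ι : RatFunc F →+* Ω := RatFunc.liftRingHom Φ hΦ
  have hιalg : ∀ p : Polynomial F, ι (algebraMap (Polynomial F) (RatFunc F) p) = Φ p := by
    intro p
    have := RatFunc.liftRingHom_apply_div Φ hΦ p 1
    simpa only [map_one, div_one] using this
  letI : Algebra (RatFunc F) Ω := ι.toAlgebra
  -- the intermediate field
  let L := IntermediateField.adjoin (RatFunc F) (Set.range t)
  have hmem : ∀ i, t i ∈ L := fun i => IntermediateField.subset_adjoin _ _ ⟨i, rfl⟩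
  haveI : Algebra.IsAlgebraic (RatFunc F) L := by
    apply IntermediateField.isAlgebraic_adjoin
    rintro x ⟨i, rfl⟩
    refine ⟨Polynomial.X ^ 2 - Polynomial.C (RatFunc.X - RatFunc.C (a i)),
      Polynomial.monic_X_pow_sub_C _ two_ne_zero, ?_⟩
    simp [Polynomial.eval₂_sub, ht i]
  let ψ : L →ₐ[RatFunc F] Ω := IsAlgClosed.lift
  let T : Fin m → L := fun i => ⟨t i, hmem i⟩
  let u : Fin m → Ω := fun i => ψ (T i)
  have hTsq : ∀ i, (T i) ^ 2 = algebraMap (RatFunc F) L (RatFunc.X - RatFunc.C (a i)) := by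
    intro i
    apply Subtype.ext
    show (t i) ^ 2 = _
    rw [ht i, IsScalarTower.algebraMap_apply (RatFunc F) L K]
    rfl
  have husq : ∀ i, u i ^ 2 = ε (PowerSeries.X ^ 2 + PowerSeries.C (fb (a j) - fb (a i))) := by
    intro i
    have h1 : u i ^ 2 = ι (RatFunc.X - RatFunc.C (a i)) := by
      rw [← map_pow, hTsq i, AlgHom.commutes]
      rfl
    have h2 : (RatFunc.X - RatFunc.C (a i)) =
        algebraMap (Polynomial F) (RatFunc F) (Polynomial.X - Polynomial.C (a i)) := by
      simp [RatFunc.algebraMap_X, RatFunc.algebraMap_C]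
    rw [h1, h2, hιalg]
    show ε (φ' (Polynomial.X - Polynomial.C (a i))) = _
    congr 1
    show (Polynomial.aeval v) (Polynomial.map fb (Polynomial.X - Polynomial.C (a i))) = _
    simp only [Polynomial.map_sub, Polynomial.map_X, Polynomial.map_C, map_sub,
      Polynomial.aeval_X, Polynomial.aeval_C, ← PowerSeries.C_eq_algebraMap]
    show v - PowerSeries.C (fb (a i)) = _
    simp only [v, map_sub]
    ring
  -- choose the power series representatives
  have key : ∀ i, ∃ w : PowerSeries Fb, ε w = u i ∧
      PowerSeries.rescale (-1 : Fb) w = (if i = j then -w else w) ∧ w ≠ 0 := by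
    intro i
    by_cases hij : i = j
    · subst hij
      have hsq : u i ^ 2 = (ε PowerSeries.X) ^ 2 := by
        rw [husq i, sub_self, map_zero, add_zero, map_pow]
      have h0 : (u i - ε PowerSeries.X) * (u i + ε PowerSeries.X) = 0 := by
        linear_combination hsq
      rcases mul_eq_zero.mp h0 with h | h
      · refine ⟨PowerSeries.X, (sub_eq_zero.mp h).symm, ?_, PowerSeries.X_ne_zero⟩
        rw [if_pos rfl, PowerSeries.rescale_neg_one_X]
      · refine ⟨-PowerSeries.X, ?_, ?_, neg_ne_zero.mpr PowerSeries.X_ne_zero⟩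
        · rw [map_neg, ← eq_neg_of_add_eq_zero_left h]
        · rw [if_pos rfl, map_neg, PowerSeries.rescale_neg_one_X, neg_neg]
    · have hc : fb (a j) - fb (a i) ≠ 0 :=
        sub_ne_zero.mpr (fun h => hij (ha (hfb h)).symm)
      obtain ⟨d, hd⟩ := IsAlgClosed.exists_pow_nat_eq (k := Fb) (fb (a j) - fb (a i))
        (n := 2) (by norm_num)
      have hdne : d ≠ 0 := by
        intro h0
        rw [h0] at hd
        simp only [ne_eq, zero_pow, OfNat.ofNat_ne_zero, not_false_eq_true] at hd
        exact hc hd.symm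
      obtain ⟨w, hw2, hw0⟩ := exists_sqrt h2b
        (PowerSeries.X ^ 2 + PowerSeries.C (fb (a j) - fb (a i))) d hdne
        (by rw [map_add, ← pow_two d, hd]; simp)
      have hwne : w ≠ 0 := by
        intro h
        rw [h, map_zero] at hw0
        exact hdne hw0.symm
      have hσw : PowerSeries.rescale (-1 : Fb) w = w := by
        have hsq : (PowerSeries.rescale (-1 : Fb) w) ^ 2 = w ^ 2 := by
          rw [← map_pow, hw2, map_add, map_pow, PowerSeries.rescale_neg_one_X,
            rescale_neg_one_C, neg_pow_two, ← hw2]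
        have h0 : (PowerSeries.rescale (-1 : Fb) w - w) *
            (PowerSeries.rescale (-1 : Fb) w + w) = 0 := by linear_combination hsq
        rcases mul_eq_zero.mp h0 with h | h
        · exact sub_eq_zero.mp h
        · exfalso
          have hsum := congrArg (PowerSeries.constantCoeff) h
          rw [map_add, map_zero] at hsum
          have hcc : PowerSeries.constantCoeff (PowerSeries.rescale (-1 : Fb) w) = d := by
            rw [← PowerSeries.coeff_zero_eq_constantCoeff, PowerSeries.coeff_rescale]
            simpa [← PowerSeries.coeff_zero_eq_constantCoeff] using hw0
          rw [hcc, hw0] at hsum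
          have h2d : (2 : Fb) * d = 0 := by linear_combination hsum
          rcases mul_eq_zero.mp h2d with h' | h'
          · exact h2b h'
          · exact hdne h'
      have hsqu : u i ^ 2 = (ε w) ^ 2 := by rw [husq i, ← hw2, map_pow]
      have h0 : (u i - ε w) * (u i + ε w) = 0 := by linear_combination hsqu
      rcases mul_eq_zero.mp h0 with h | h
      · exact ⟨w, (sub_eq_zero.mp h).symm, by rw [if_neg hij, hσw], hwne⟩
      · exact ⟨-w, by rw [map_neg, ← eq_neg_of_add_eq_zero_left h],
          by rw [if_neg hij, map_neg, hσw], neg_ne_zero.mpr hwne⟩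
  choose W hW1 hW2 hW3 using key
  -- the relation, pushed down to power series
  have hval : Function.Injective (L.val) := L.val.toRingHom.injective
  have hsumL : (∑ i, g i • T i) = 0 := by
    apply hval
    rw [map_sum, map_zero]
    simpa using hg
  have hrel : ∑ i, ι (g i) * u i = 0 := by
    have hψ := congrArg ψ hsumL
    rw [map_sum, map_zero] at hψ
    simpa only [Algebra.smul_def, map_mul, AlgHom.commutes, RingHom.algebraMap_toAlgebra] using hψ
  let D : Polynomial F := ∏ i, (g i).denom
  let pp : Fin m → Polynomial F := fun i =>
    (g i).num * ∏ i' ∈ Finset.univ.erase i, (g i').denom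
  have hgD : ∀ i, g i * algebraMap (Polynomial F) (RatFunc F) D
      = algebraMap (Polynomial F) (RatFunc F) (pp i) := by
    intro i
    have hD : D = (g i).denom * ∏ i' ∈ Finset.univ.erase i, (g i').denom :=
      (Finset.mul_prod_erase _ _ (Finset.mem_univ i)).symm
    have hnd : g i * algebraMap (Polynomial F) (RatFunc F) ((g i).denom)
        = algebraMap (Polynomial F) (RatFunc F) ((g i).num) :=
      (eq_div_iff (RatFunc.algebraMap_ne_zero (RatFunc.denom_ne_zero (g i)))).mp
        (RatFunc.num_div_denom (g i)).symm
    rw [hD, map_mul, ← mul_assoc, hnd, ← map_mul]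
  have hrelP : (∑ i, φ' (pp i) * W i) = 0 := by
    apply hε
    rw [map_sum, map_zero]
    have hterm : ∀ i, ε (φ' (pp i) * W i) = (ι (g i) * u i) * ι (algebraMap _ _ D) := by
      intro i
      rw [map_mul, hW1]
      show Φ (pp i) * u i = _
      rw [← hιalg, ← hgD i, map_mul]
      ring
    rw [Finset.sum_congr rfl (fun i _ => hterm i), ← Finset.sum_mul, hrel, zero_mul]
  have hrelσ : (∑ i, φ' (pp i) * PowerSeries.rescale (-1 : Fb) (W i)) = 0 := by
    have hσ := congrArg (PowerSeries.rescale (-1 : Fb)) hrelP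
    rw [map_sum, map_zero] at hσ
    rw [← hσ]
    apply Finset.sum_congr rfl
    intro i _
    have hfix : PowerSeries.rescale (-1 : Fb) (φ' (pp i)) = φ' (pp i) :=
      rescale_neg_one_aeval (fb (a j)) ((pp i).map fb)
    conv_rhs => rw [map_mul]
    rw [hfix]
  have h2O : (2 : PowerSeries Fb) * (φ' (pp j) * W j) = 0 := by
    have hdiff : ∑ i, (φ' (pp i) * W i - φ' (pp i) * PowerSeries.rescale (-1 : Fb) (W i)) = 0 := by
      rw [Finset.sum_sub_distrib, hrelP, hrelσ, sub_zero]
    rw [Finset.sum_eq_single j] at hdiff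
    · rw [hW2 j, if_pos rfl] at hdiff
      linear_combination hdiff
    · intro i _ hij
      rw [hW2 i, if_neg hij, sub_self]
    · intro h
      exact absurd (Finset.mem_univ j) h
  have hφpj : φ' (pp j) = 0 := by
    have h2P : (2 : PowerSeries Fb) ≠ 0 := by
      intro h
      have hcc := congrArg (PowerSeries.constantCoeff) h
      rw [map_ofNat, map_zero] at hcc
      exact h2b hcc
    rcases mul_eq_zero.mp h2O with h | h
    · exact absurd h h2P
    · rcases mul_eq_zero.mp h with h' | h'
      · exact h'
      · exact absurd h' (hW3 j)
  have hppj : pp j = 0 := by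
    by_contra hne
    exact hφ'ne _ hne hφpj
  have hnum : (g j).num = 0 := by
    have hprod : (∏ i' ∈ Finset.univ.erase j, (g i').denom) ≠ 0 :=
      Finset.prod_ne_zero_iff.mpr (fun i _ => RatFunc.denom_ne_zero _)
    rcases mul_eq_zero.mp hppj with h | h
    · exact h
    · exact absurd h hprod
  exact RatFunc.num_eq_zero_iff.mp hnum
end
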